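/- Let p = q + r with r ≥ 0, write B = [B₁ B₂] where B₁ ∈ ℝ^{n×q} consists of the first q columns of B and B₂ ∈ ℝ^{n×r} of the last r columns, and assume the q×q matrix C·B₁ is invertible. Let y_d : [0,T] → ℝ^q be continuously differentiable with y_d(0) = C·x₀. Then for every continuous f : [0,T] → ℝ^r there exists a unique continuous g : [0,T] → ℝ^q such that the input u(t) = (g(t), f(t)) (whose first q components are g(t) and last r components are f(t)) satisfies y(u)(t) = y_d(t) for all t ∈ [0,T]. -/

import Mathlib

open MeasureTheory Set NormedSpace



noncomputable def mulVecL {m n : ℕ} (M : Matrix (Fin m) (Fin n) ℝ) :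
    (Fin n → ℝ) →L[ℝ] (Fin m → ℝ) :=
  LinearMap.toContinuousLinearMap M.mulVecLin

@[simp] lemma mulVecL_apply {m n : ℕ} (M : Matrix (Fin m) (Fin n) ℝ) (v : Fin n → ℝ) :
    mulVecL M v = M.mulVec v := rfl

lemma continuousOn_mulVec {m n : ℕ} {M : ℝ → Matrix (Fin m) (Fin n) ℝ}
    {v : ℝ → Fin n → ℝ} {s : Set ℝ} (hM : ContinuousOn M s) (hv : ContinuousOn v s) :
    ContinuousOn (fun t => (M t).mulVec (v t)) s := by
  apply continuousOn_pi.2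
  intro i
  simp only [Matrix.mulVec, dotProduct]
  apply continuousOn_finset_sum
  intro j _
  exact (((continuous_apply j).comp (continuous_apply i)).comp_continuousOn hM).mul
    ((continuous_apply j).comp_continuousOn hv)

lemma expM_continuous {n : ℕ} (A : Matrix (Fin n) (Fin n) ℝ) :
    Continuous fun t : ℝ => exp (t • A) := by
  letI : SeminormedRing (Matrix (Fin n) (Fin n) ℝ) := Matrix.linftyOpSemiNormedRing
  letI : NormedRing (Matrix (Fin n) (Fin n) ℝ) := Matrix.linftyOpNormedRing
  letI : NormedAlgebra ℝ (Matrix (Fin n) (Fin n) ℝ) := Matrix.linftyOpNormedAlgebra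
  exact (continuous_iff_continuousAt.2 fun x => (exp_analytic (𝕂 := ℝ) x).continuousAt).comp
    (continuous_id.smul continuous_const)

lemma expM_add {n : ℕ} (A : Matrix (Fin n) (Fin n) ℝ) (s t : ℝ) :
    exp ((s + t) • A) = exp (s • A) * exp (t • A) := by
  rw [add_smul]
  exact Matrix.exp_add_of_commute _ _ ((Commute.refl A).smul_left s |>.smul_right t)

lemma expM_mul_neg {n : ℕ} (A : Matrix (Fin n) (Fin n) ℝ) (t : ℝ) :
    exp (t • A) * exp ((-t) • A) = 1 := by
  rw [← expM_add]
  simp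

lemma hasDerivWithinAt_exp_mulVec {n : ℕ} (A : Matrix (Fin n) (Fin n) ℝ)
    {z : ℝ → Fin n → ℝ} {z' : Fin n → ℝ} {s : Set ℝ} {t : ℝ}
    (hz : HasDerivWithinAt z z' s t) :
    HasDerivWithinAt (fun u => (exp (u • A)).mulVec (z u))
      (A.mulVec ((exp (t • A)).mulVec (z t)) + (exp (t • A)).mulVec z') s t := by
  letI : SeminormedRing (Matrix (Fin n) (Fin n) ℝ) := Matrix.linftyOpSemiNormedRing
  letI : NormedRing (Matrix (Fin n) (Fin n) ℝ) := Matrix.linftyOpNormedRing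
  letI : NormedAlgebra ℝ (Matrix (Fin n) (Fin n) ℝ) := Matrix.linftyOpNormedAlgebra
  have hL : ∃ L : Matrix (Fin n) (Fin n) ℝ →L[ℝ] ((Fin n → ℝ) →L[ℝ] (Fin n → ℝ)),
      ∀ M v, L M v = M.mulVec v := by
    refine ⟨LinearMap.toContinuousLinearMap
      { toFun := fun M => mulVecL M
        map_add' := ?_
        map_smul' := ?_ }, fun M v => rfl⟩
    · intro M N; ext v i; simp [mulVecL, Matrix.add_mulVec]
    · intro c M; ext v i; simp [mulVecL, Matrix.smul_mulVec]
  obtain ⟨L, hLa⟩ := hL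
  have hexp : HasDerivAt (fun u : ℝ => exp (u • A)) (A * exp (t • A)) t :=
    hasDerivAt_exp_smul_const' A t
  have hc : HasDerivWithinAt (fun u => L (exp (u • A))) (L (A * exp (t • A))) s t :=
    (L.hasFDerivAt.comp_hasDerivAt t hexp).hasDerivWithinAt
  have h2 := hc.clm_apply hz
  simp only [hLa] at h2
  rw [Matrix.mulVec_mulVec]
  exact h2

section duhamel
variable {n : ℕ} (A : Matrix (Fin n) (Fin n) ℝ) (x₀ : Fin n → ℝ) (v : ℝ → Fin n → ℝ)

/-- The variation-of-constants solution of `x' = Ax + v`, `x 0 = x₀`. -/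
noncomputable def Xsol (t : ℝ) : Fin n → ℝ :=
  (exp (t • A)).mulVec (x₀ + ∫ τ in (0:ℝ)..t, (exp ((-τ) • A)).mulVec (v τ))

variable {T : ℝ} (hT : 0 ≤ T) {v}

lemma G_contOn (hv : ContinuousOn v (Icc 0 T)) :
    ContinuousOn (fun τ => (exp ((-τ) • A)).mulVec (v τ)) (Icc 0 T) :=
  continuousOn_mulVec (((expM_continuous A).comp continuous_neg).continuousOn) hv

lemma G_intble (hv : ContinuousOn v (Icc 0 T)) {t : ℝ} (ht : t ∈ Icc 0 T) :
    IntervalIntegrable (fun τ => (exp ((-τ) • A)).mulVec (v τ)) volume 0 t := by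
  apply ContinuousOn.intervalIntegrable
  rw [uIcc_of_le ht.1]
  exact (G_contOn A hv).mono (Icc_subset_Icc le_rfl ht.2)

lemma Xsol_zero : Xsol A x₀ v 0 = x₀ := by
  simp [Xsol]

lemma Xsol_deriv (hv : ContinuousOn v (Icc 0 T)) {t : ℝ} (ht : t ∈ Icc 0 T) :
    HasDerivWithinAt (Xsol A x₀ v) (A.mulVec (Xsol A x₀ v t) + v t) (Icc 0 T) t := by
  haveI : Fact (t ∈ Icc 0 T) := ⟨ht⟩
  have hz : HasDerivWithinAt
      (fun u => x₀ + ∫ τ in (0:ℝ)..u, (exp ((-τ) • A)).mulVec (v τ))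
      ((exp ((-t) • A)).mulVec (v t)) (Icc 0 T) t := by
    have := (hasDerivWithinAt_const t (Icc 0 T) x₀).add
      (intervalIntegral.integral_hasDerivWithinAt_right (f := fun τ => (exp ((-τ) • A)).mulVec (v τ))
        (G_intble A hv ht)
        ((G_contOn A hv).stronglyMeasurableAtFilter_nhdsWithin measurableSet_Icc t)
        ((G_contOn A hv) t ht))
    simpa [Pi.add_def] using this
  have h2 : (exp (t • A)).mulVec ((exp ((-t) • A)).mulVec (v t)) = v t := by
    rw [Matrix.mulVec_mulVec, expM_mul_neg, Matrix.one_mulVec]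
  have := hasDerivWithinAt_exp_mulVec A hz
  rw [h2] at this
  exact this

lemma Xsol_contOn (hv : ContinuousOn v (Icc 0 T)) :
    ContinuousOn (Xsol A x₀ v) (Icc 0 T) :=
  fun t ht => (Xsol_deriv A x₀ hv ht).continuousWithinAt

lemma Xsol_eq (hv : ContinuousOn v (Icc 0 T)) {t : ℝ} (ht : t ∈ Icc 0 T) :
    Xsol A x₀ v t =
      (exp (t • A)).mulVec x₀ +
        ∫ τ in (0:ℝ)..t, (exp ((t - τ) • A)).mulVec (v τ) := by
  have key : (∫ τ in (0:ℝ)..t, (exp ((t - τ) • A)).mulVec (v τ)) =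
      (exp (t • A)).mulVec (∫ τ in (0:ℝ)..t, (exp ((-τ) • A)).mulVec (v τ)) := by
    rw [← mulVecL_apply, ← (mulVecL (exp (t • A))).intervalIntegral_comp_comm (G_intble A hv ht)]
    apply intervalIntegral.integral_congr
    intro τ _
    show _ = (exp (t • A)).mulVec _
    rw [Matrix.mulVec_mulVec, ← expM_add]
    ring_nf
  rw [Xsol, Matrix.mulVec_add, key]

end duhamel

lemma lip_affine {m : ℕ} (Am : Matrix (Fin m) (Fin m) ℝ) (c : Fin m → ℝ) :
    LipschitzWith ‖mulVecL Am‖₊ (fun z : Fin m → ℝ => Am.mulVec z + c) := fun a b => by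
  calc edist (Am.mulVec a + c) (Am.mulVec b + c) = edist (mulVecL Am a) (mulVecL Am b) := by
        rw [edist_add_right]; rfl
    _ ≤ ‖mulVecL Am‖₊ * edist a b := (mulVecL Am).lipschitz a b

lemma ode_unique {m : ℕ} (Am : Matrix (Fin m) (Fin m) ℝ) {u x y : ℝ → Fin m → ℝ} {T : ℝ}
    (hx : ContinuousOn x (Icc 0 T))
    (hx' : ∀ t ∈ Icc 0 T, HasDerivWithinAt x (Am.mulVec (x t) + u t) (Icc 0 T) t)
    (hy : ContinuousOn y (Icc 0 T))
    (hy' : ∀ t ∈ Icc 0 T, HasDerivWithinAt y (Am.mulVec (y t) + u t) (Icc 0 T) t)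
    (h0 : x 0 = y 0) : EqOn x y (Icc 0 T) := by
  refine ODE_solution_unique (v := fun t z => Am.mulVec z + u t) (K := ‖mulVecL Am‖₊)
    (fun t => lip_affine Am (u t)) hx (fun t ht => ?_) hy (fun t ht => ?_) h0
  · exact (hx' t (Ico_subset_Icc_self ht)).mono_of_mem_nhdsWithin (Icc_mem_nhdsGE_of_mem ht)
  · exact (hy' t (Ico_subset_Icc_self ht)).mono_of_mem_nhdsWithin (Icc_mem_nhdsGE_of_mem ht)


/-- **over-actuated case: free input components.** Write `p = q + r` and
`B = [B₁ B₂]` with `C·B₁` invertible. For a `C¹` trajectory `y_d` with `y_d(0) = C·x₀`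
and any continuous free part `f : [0,T] → ℝʳ`, there is a unique continuous `g` such that
the input `u(t) = (g(t), f(t))` generates the output `y_d`. -/
theorem unique_essential_input_of_over_actuated
    (T : ℝ) (hT : 0 < T) (n q r : ℕ)
    (A : Matrix (Fin n) (Fin n) ℝ) (B : Matrix (Fin n) (Fin (q + r)) ℝ)
    (C : Matrix (Fin q) (Fin n) ℝ) (x₀ : Fin n → ℝ)
    (w : ℝ → Fin n → ℝ) (hw : ContinuousOn w (Icc 0 T))
    (hCB₁ : IsUnit (C * Matrix.of fun i (j : Fin q) => B i (Fin.castAdd r j)))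
    (yd : ℝ → Fin q → ℝ) (hyd : ContDiffOn ℝ 1 yd (Icc 0 T))
    (hyd0 : yd 0 = C.mulVec x₀)
    (f : ℝ → Fin r → ℝ) (hf : ContinuousOn f (Icc 0 T)) :
    ∃ g : ℝ → Fin q → ℝ,
      (ContinuousOn g (Icc 0 T) ∧
        ∀ t ∈ Icc (0:ℝ) T,
          C.mulVec ((NormedSpace.exp (t • A)).mulVec x₀) +
            (∫ τ in (0:ℝ)..t,
              C.mulVec ((NormedSpace.exp ((t - τ) • A)).mulVec
                (B.mulVec (Fin.append (g τ) (f τ)) + w τ))) = yd t) ∧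
      ∀ g' : ℝ → Fin q → ℝ,
        (ContinuousOn g' (Icc 0 T) ∧
          ∀ t ∈ Icc (0:ℝ) T,
            C.mulVec ((NormedSpace.exp (t • A)).mulVec x₀) +
              (∫ τ in (0:ℝ)..t,
                C.mulVec ((NormedSpace.exp ((t - τ) • A)).mulVec
                  (B.mulVec (Fin.append (g' τ) (f τ)) + w τ))) = yd t) →
        ∀ t ∈ Icc (0:ℝ) T, g' t = g t := by
  -- basic matrices
  set B₁ : Matrix (Fin n) (Fin q) ℝ := Matrix.of fun i (j : Fin q) => B i (Fin.castAdd r j) with hB₁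
  set B₂ : Matrix (Fin n) (Fin r) ℝ := Matrix.of fun i (j : Fin r) => B i (Fin.natAdd q j) with hB₂
  have hsplit : ∀ (a : Fin q → ℝ) (b : Fin r → ℝ),
      B.mulVec (Fin.append a b) = B₁.mulVec a + B₂.mulVec b := by
    intro a b; funext i
    simp [Matrix.mulVec, dotProduct, Fin.sum_univ_add, hB₁, hB₂]
  obtain ⟨U, hU⟩ := hCB₁
  set N : Matrix (Fin q) (Fin q) ℝ := ↑U⁻¹ with hN
  have hNM : N * (C * B₁) = 1 := by rw [hN, ← hU]; exact U.inv_mul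
  have hMN : C * B₁ * N = 1 := by rw [hN, ← hU]; exact U.mul_inv
  have cancelN : ∀ z : Fin q → ℝ, N.mulVec ((C * B₁).mulVec z) = z := fun z => by
    rw [Matrix.mulVec_mulVec, hNM, Matrix.one_mulVec]
  -- derivative of yd
  have hud : UniqueDiffOn ℝ (Icc (0:ℝ) T) := uniqueDiffOn_Icc hT
  set yd' := fun t => derivWithin yd (Icc 0 T) t with hyd'def
  have hyd'c : ContinuousOn yd' (Icc 0 T) := hyd.continuousOn_derivWithin hud le_rfl
  have hydd : ∀ t ∈ Icc (0:ℝ) T, HasDerivWithinAt yd (yd' t) (Icc 0 T) t :=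
    fun t ht => (hyd.differentiableOn one_ne_zero t ht).hasDerivWithinAt
  -- data
  set h := fun t => yd' t - (C * B₂).mulVec (f t) - C.mulVec (w t) with hh
  have hhc : ContinuousOn h (Icc 0 T) :=
    (hyd'c.sub (continuousOn_mulVec continuousOn_const hf)).sub
      (continuousOn_mulVec continuousOn_const hw)
  set Am := A - B₁ * N * (C * A) with hAm
  set vt := fun t => B₁.mulVec (N.mulVec (h t)) + B₂.mulVec (f t) + w t with hvt
  have hvtc : ContinuousOn vt (Icc 0 T) :=
    ((continuousOn_mulVec continuousOn_const
        (continuousOn_mulVec continuousOn_const hhc)).add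
      (continuousOn_mulVec continuousOn_const hf)).add hw
  set x := Xsol Am x₀ vt with hx
  have hxc : ContinuousOn x (Icc 0 T) := Xsol_contOn Am x₀ hvtc
  have hxd : ∀ t ∈ Icc (0:ℝ) T, HasDerivWithinAt x (Am.mulVec (x t) + vt t) (Icc 0 T) t :=
    fun t ht => Xsol_deriv Am x₀ hvtc ht
  set g := fun t => N.mulVec (h t - (C * A).mulVec (x t)) with hg
  have hgc : ContinuousOn g (Icc 0 T) :=
    continuousOn_mulVec continuousOn_const
      (hhc.sub (continuousOn_mulVec continuousOn_const hxc))
  -- algebra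
  have halg : ∀ (t : ℝ) (X : Fin n → ℝ),
      B₁.mulVec (N.mulVec (h t - (C * A).mulVec X)) + B₂.mulVec (f t) + w t
        = vt t - (B₁ * N * (C * A)).mulVec X := by
    intro t X
    simp only [hvt, Matrix.mulVec_sub, ← Matrix.mulVec_mulVec]
    abel
  have hode : ∀ (t : ℝ) (X : Fin n → ℝ),
      A.mulVec X + (vt t - (B₁ * N * (C * A)).mulVec X) = Am.mulVec X + vt t := by
    intro t X
    rw [hAm, Matrix.sub_mulVec]
    abel
  have hCAm : C * Am = 0 := by
    rw [hAm, Matrix.mul_sub, ← Matrix.mul_assoc C (B₁ * N) (C * A),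
      ← Matrix.mul_assoc C B₁ N, hMN, Matrix.one_mul, sub_self]
  have hCvt : ∀ s : ℝ, C.mulVec (vt s) = yd' s := by
    intro s
    simp only [hvt, Matrix.mulVec_add, Matrix.mulVec_mulVec]
    rw [← Matrix.mul_assoc C B₁ N, hMN, Matrix.one_mulVec, hh]
    module
  -- output rewriting
  have houtput : ∀ (γ : ℝ → Fin q → ℝ), ContinuousOn γ (Icc 0 T) →
      ContinuousOn (fun τ => B.mulVec (Fin.append (γ τ) (f τ)) + w τ) (Icc 0 T) := by
    intro γ hγ
    have : (fun τ => B.mulVec (Fin.append (γ τ) (f τ)) + w τ)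
        = fun τ => B₁.mulVec (γ τ) + B₂.mulVec (f τ) + w τ := by
      funext τ; rw [hsplit]
    rw [this]
    exact ((continuousOn_mulVec continuousOn_const hγ).add
      (continuousOn_mulVec continuousOn_const hf)).add hw
  have hout : ∀ (γ : ℝ → Fin q → ℝ), ContinuousOn γ (Icc 0 T) → ∀ t ∈ Icc (0:ℝ) T,
      C.mulVec ((exp (t • A)).mulVec x₀) +
        (∫ τ in (0:ℝ)..t, C.mulVec ((exp ((t - τ) • A)).mulVec
            (B.mulVec (Fin.append (γ τ) (f τ)) + w τ)))
      = C.mulVec (Xsol A x₀ (fun τ => B.mulVec (Fin.append (γ τ) (f τ)) + w τ) t) := by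
    intro γ hγ t ht
    have hvγc := houtput γ hγ
    have hint : IntervalIntegrable
        (fun τ => (exp ((t - τ) • A)).mulVec (B.mulVec (Fin.append (γ τ) (f τ)) + w τ))
        volume 0 t := by
      apply ContinuousOn.intervalIntegrable
      rw [uIcc_of_le ht.1]
      exact continuousOn_mulVec
        (((expM_continuous A).comp (continuous_const.sub continuous_id)).continuousOn)
        (hvγc.mono (Icc_subset_Icc le_rfl ht.2))
    have hpull : (∫ τ in (0:ℝ)..t, C.mulVec ((exp ((t - τ) • A)).mulVec
          (B.mulVec (Fin.append (γ τ) (f τ)) + w τ)))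
        = C.mulVec (∫ τ in (0:ℝ)..t, (exp ((t - τ) • A)).mulVec
            (B.mulVec (Fin.append (γ τ) (f τ)) + w τ)) := by
      rw [← mulVecL_apply C, ← (mulVecL C).intervalIntegral_comp_comm hint]
      simp only [mulVecL_apply]
    rw [hpull, Xsol_eq A x₀ hvγc ht, Matrix.mulVec_add]
  -- x solves the A-ODE with input from g
  have hxdA : ∀ t ∈ Icc (0:ℝ) T, HasDerivWithinAt x
      (A.mulVec (x t) + (B.mulVec (Fin.append (g t) (f t)) + w t)) (Icc 0 T) t := by
    intro t ht
    have key : B.mulVec (Fin.append (g t) (f t)) + w t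
        = vt t - (B₁ * N * (C * A)).mulVec (x t) := by
      rw [hsplit]
      simp only [hg]
      exact halg t (x t)
    have hd := hxd t ht
    rw [← hode t (x t), ← key] at hd
    exact hd
  have hvgc := houtput g hgc
  have hXx : EqOn (Xsol A x₀ (fun τ => B.mulVec (Fin.append (g τ) (f τ)) + w τ)) x (Icc 0 T) :=
    ode_unique A (Xsol_contOn A x₀ hvgc) (fun t ht => Xsol_deriv A x₀ hvgc ht)
      hxc hxdA (by rw [Xsol_zero, hx, Xsol_zero])
  -- C x = yd
  have hCx : EqOn (fun t => C.mulVec (x t)) yd (Icc 0 T) := by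
    apply ode_unique (0 : Matrix (Fin q) (Fin q) ℝ) (u := yd')
      (continuousOn_mulVec continuousOn_const hxc) ?_ hyd.continuousOn ?_
      (by rw [hx, Xsol_zero, hyd0])
    · intro t ht
      have hd := ((mulVecL C).hasFDerivAt).comp_hasDerivWithinAt t (hxd t ht)
      simp only [Function.comp_def, mulVecL_apply] at hd
      have hval : C.mulVec (Am.mulVec (x t) + vt t)
          = (0 : Matrix (Fin q) (Fin q) ℝ).mulVec (C.mulVec (x t)) + yd' t := by
        rw [Matrix.zero_mulVec, zero_add, Matrix.mulVec_add, Matrix.mulVec_mulVec, hCAm,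
          Matrix.zero_mulVec, zero_add]
        exact hCvt t
      rw [hval] at hd
      exact hd
    · intro t ht
      have hd := hydd t ht
      rwa [show yd' t = (0 : Matrix (Fin q) (Fin q) ℝ).mulVec (yd t) + yd' t by
        rw [Matrix.zero_mulVec, zero_add]] at hd
  refine ⟨g, ⟨hgc, ?_⟩, ?_⟩
  · intro t ht
    rw [hout g hgc t ht, hXx ht]
    exact hCx ht
  · rintro g' ⟨hg'c, hout'⟩
    have hvg'c := houtput g' hg'c
    set x' := Xsol A x₀ (fun τ => B.mulVec (Fin.append (g' τ) (f τ)) + w τ) with hx'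
    have hCx' : ∀ s ∈ Icc (0:ℝ) T, C.mulVec (x' s) = yd s := by
      intro s hs
      rw [hx', ← hout g' hg'c s hs]
      exact hout' s hs
    have hg'eq : ∀ s ∈ Icc (0:ℝ) T, g' s = N.mulVec (h s - (C * A).mulVec (x' s)) := by
      intro s hs
      have hd := ((mulVecL C).hasFDerivAt).comp_hasDerivWithinAt s (Xsol_deriv A x₀ hvg'c hs)
      simp only [Function.comp_def, mulVecL_apply] at hd
      rw [← hx'] at hd
      have hyd2 : HasDerivWithinAt yd
          (C.mulVec (A.mulVec (x' s) + (B.mulVec (Fin.append (g' s) (f s)) + w s)))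
          (Icc 0 T) s :=
        hd.congr (fun u hu => (hCx' u hu).symm) (hCx' s hs).symm
      have hDeq : C.mulVec (A.mulVec (x' s) + (B.mulVec (Fin.append (g' s) (f s)) + w s))
          = yd' s := by
        rw [hyd'def]
        exact (hyd2.derivWithin (hud s hs)).symm
      have hexp2 : C.mulVec (A.mulVec (x' s) + (B.mulVec (Fin.append (g' s) (f s)) + w s))
          = (C * A).mulVec (x' s) + ((C * B₁).mulVec (g' s)
              + (C * B₂).mulVec (f s) + C.mulVec (w s)) := by
        rw [hsplit]
        simp only [Matrix.mulVec_add, Matrix.mulVec_mulVec]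
      rw [hexp2] at hDeq
      have hMg : (C * B₁).mulVec (g' s) = h s - (C * A).mulVec (x' s) := by
        simp only [hh]
        rw [← hDeq]
        abel
      rw [← hMg, cancelN]
    have hx'dAm : ∀ s ∈ Icc (0:ℝ) T,
        HasDerivWithinAt x' (Am.mulVec (x' s) + vt s) (Icc 0 T) s := by
      intro s hs
      have hd := Xsol_deriv A x₀ hvg'c hs
      rw [← hx'] at hd
      have key : B.mulVec (Fin.append (g' s) (f s)) + w s
          = vt s - (B₁ * N * (C * A)).mulVec (x' s) := by
        rw [hsplit, hg'eq s hs]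
        exact halg s (x' s)
      rw [key, hode s (x' s)] at hd
      exact hd
    have hx'x : EqOn x' x (Icc 0 T) :=
      ode_unique Am (by rw [hx']; exact Xsol_contOn A x₀ hvg'c) hx'dAm hxc hxd
        (by rw [hx', Xsol_zero, hx, Xsol_zero])
    intro t ht
    rw [hg'eq t ht, hx'x ht, hg]
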